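/- Let n ≥ 1 and let Ẑ be uniformly distributed on the unit sphere S^{n−1} ⊂ ℝⁿ. For any fixed unit vector r̂ and any γ with 1/sqrt(2πn) < γ < 1, the probability that ⟨r̂, Ẑ⟩ ≥ γ is at most (1 − γ²)^{(n−1)/2}. -/

import Mathlib

open MeasureTheory
open scoped RealInnerProductSpace

open Set Real
open scoped ENNReal

lemma aux_exists_onb (m : ℕ) (r : EuclideanSpace ℝ (Fin (m+1))) (hr : ‖r‖ = 1) :
    ∃ b : OrthonormalBasis (Fin (m+1)) ℝ (EuclideanSpace ℝ (Fin (m+1))), b 0 = r := by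
  have hv : Orthonormal ℝ (({0} : Set (Fin (m+1))).restrict (fun _ => r)) := by
    constructor
    · intro i; exact hr
    · intro i j hij; exact absurd (Subsingleton.elim i j) hij
  obtain ⟨b, hb⟩ := hv.exists_orthonormalBasis_extension_of_card_eq (by simp)
  exact ⟨b, hb 0 rfl⟩

lemma aux_slice (m : ℕ) (r : EuclideanSpace ℝ (Fin (m+1))) (hr : ‖r‖ = 1)
    (I : Set ℝ) (hI : MeasurableSet I) (f : ℝ → ℝ) (hf : Measurable f)
    (hf0 : ∀ t ∈ I, 0 ≤ f t) :
    volume {x : EuclideanSpace ℝ (Fin (m+1)) | ⟪r, x⟫ ∈ I ∧ ‖x‖^2 - ⟪r, x⟫^2 ≤ f ⟪r, x⟫}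
      = ∫⁻ t in I, volume (Metric.closedBall (0 : EuclideanSpace ℝ (Fin m)) (Real.sqrt (f t))) := by
  classical
  obtain ⟨b, hb⟩ := aux_exists_onb m r hr
  set S₃ : Set (ℝ × (Fin m → ℝ)) := {p | p.1 ∈ I ∧ (∑ j, (p.2 j)^2) ≤ f p.1} with hS₃def
  have hS₃ : MeasurableSet S₃ := by
    apply MeasurableSet.inter
    · exact measurable_fst hI
    · exact measurableSet_le (by fun_prop) (hf.comp measurable_fst)
  have happ : ∀ u : (Fin (m+1) → ℝ),
      (MeasurableEquiv.piFinSuccAbove (fun _ => ℝ) 0) u = (u 0, fun j => u (Fin.succAbove 0 j)) :=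
    fun _ => rfl
  have h1 : {x : EuclideanSpace ℝ (Fin (m+1)) | ⟪r, x⟫ ∈ I ∧ ‖x‖^2 - ⟪r, x⟫^2 ≤ f ⟪r, x⟫}
      = b.repr ⁻¹' ((MeasurableEquiv.toLp 2 (Fin (m+1) → ℝ)).symm ⁻¹'
        ((MeasurableEquiv.piFinSuccAbove (fun _ => ℝ) 0) ⁻¹' S₃)) := by
    ext x
    have hinner : ⟪r, x⟫ = b.repr x 0 := by
      rw [← hb, b.repr_apply_apply]
    have hnorm : ‖x‖^2 = ∑ i, (b.repr x i)^2 := by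
      rw [← b.repr.norm_map x, EuclideanSpace.norm_eq, sq_sqrt (by positivity)]
      simp [Real.norm_eq_abs, sq_abs]
    have hmem : x ∈ b.repr ⁻¹' ((MeasurableEquiv.toLp 2 (Fin (m+1) → ℝ)).symm ⁻¹'
        ((MeasurableEquiv.piFinSuccAbove (fun _ => ℝ) 0) ⁻¹' S₃))
        ↔ (b.repr x 0 ∈ I ∧ (∑ j, (b.repr x (Fin.succAbove 0 j))^2) ≤ f (b.repr x 0)) := by
      simp only [mem_preimage, happ]
      exact Iff.rfl
    rw [mem_setOf_eq, hmem, hinner, hnorm]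
    have hsum : ∑ i, (b.repr x i)^2
        = (b.repr x 0)^2 + ∑ j, (b.repr x (Fin.succAbove 0 j))^2 :=
      Fin.sum_univ_succAbove (fun i => (b.repr x i)^2) 0
    constructor
    · rintro ⟨ha, h2⟩; exact ⟨ha, by linarith⟩
    · rintro ⟨ha, h2⟩; exact ⟨ha, by linarith⟩
  rw [h1]
  have hTm : MeasurableSet ((MeasurableEquiv.toLp 2 (Fin (m+1) → ℝ)).symm ⁻¹'
      ((MeasurableEquiv.piFinSuccAbove (fun _ : Fin (m+1) => ℝ) 0) ⁻¹' S₃)) :=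
    (MeasurableEquiv.toLp 2 (Fin (m+1) → ℝ)).symm.measurable
      ((MeasurableEquiv.piFinSuccAbove (fun _ => ℝ) 0).measurable hS₃)
  rw [b.measurePreserving_repr.measure_preimage hTm.nullMeasurableSet]
  rw [(EuclideanSpace.volume_preserving_symm_measurableEquiv_toLp (Fin (m+1))).measure_preimage
    (((MeasurableEquiv.piFinSuccAbove (fun _ => ℝ) 0).measurable hS₃).nullMeasurableSet)]
  rw [show (volume : Measure (Fin (m+1) → ℝ)) = Measure.pi (fun _ => volume) from volume_pi,
    (measurePreserving_piFinSuccAbove (fun _ : Fin (m+1) => (volume : Measure ℝ)) 0).measure_preimage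
    hS₃.nullMeasurableSet]
  rw [Measure.prod_apply hS₃]
  set g : ℝ → ℝ≥0∞ := fun t => Measure.pi (fun _ : Fin m => (volume : Measure ℝ))
    {y : Fin m → ℝ | ∑ j, (y j)^2 ≤ f t} with hgdef
  have hsl : (fun t => Measure.pi (fun _ : Fin m => (volume : Measure ℝ)) (Prod.mk t ⁻¹' S₃))
      = I.indicator g := by
    funext t
    by_cases ht : t ∈ I
    · rw [Set.indicator_of_mem ht, hgdef]
      congr 1
      ext y; simp [hS₃def, ht]
    · rw [Set.indicator_of_notMem ht]
      have : (Prod.mk t ⁻¹' S₃) = ∅ := by ext y; simp [hS₃def, ht]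
      rw [this, measure_empty]
  rw [hsl, lintegral_indicator hI]
  apply setLIntegral_congr_fun hI
  intro t ht
  have h2 : (Metric.closedBall (0 : EuclideanSpace ℝ (Fin m)) (Real.sqrt (f t)))
      = (MeasurableEquiv.toLp 2 (Fin m → ℝ)).symm ⁻¹' {y : Fin m → ℝ | ∑ j, (y j)^2 ≤ f t} := by
    ext y
    have hy : ((MeasurableEquiv.toLp 2 (Fin m → ℝ)).symm y : Fin m → ℝ) = y.ofLp := rfl
    simp only [Metric.mem_closedBall, mem_preimage, mem_setOf_eq, dist_zero_right, hy]
    rw [EuclideanSpace.norm_eq,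
      show (∑ i, ‖y i‖^2) = ∑ j, (y j)^2 by simp [Real.norm_eq_abs, sq_abs]]
    constructor
    · intro h
      calc ∑ j, (y j)^2 = Real.sqrt (∑ j, (y j)^2) ^2 := (sq_sqrt (by positivity)).symm
        _ ≤ Real.sqrt (f t) ^ 2 := by gcongr
        _ = f t := sq_sqrt (hf0 t ht)
    · intro h
      exact Real.sqrt_le_sqrt h
  show g t = volume (Metric.closedBall (0 : EuclideanSpace ℝ (Fin m)) (Real.sqrt (f t)))
  rw [hgdef, h2, (EuclideanSpace.volume_preserving_symm_measurableEquiv_toLp (Fin m)).measure_preimage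
    ((measurableSet_le (by fun_prop) measurable_const).nullMeasurableSet),
    show (volume : Measure (Fin m → ℝ)) = Measure.pi (fun _ => volume) from volume_pi]

lemma aux_ball_vol (m : ℕ) (hm : 1 ≤ m) (ρ : ℝ) (hρ : 0 ≤ ρ) :
    volume (Metric.closedBall (0 : EuclideanSpace ℝ (Fin m)) ρ)
      = ENNReal.ofReal (ρ^m * (Real.sqrt π ^ m / Real.Gamma (m/2+1))) := by
  haveI : Nonempty (Fin m) := ⟨⟨0, hm⟩⟩
  rw [EuclideanSpace.volume_closedBall, Fintype.card_fin, ← ENNReal.ofReal_pow hρ,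
    ← ENNReal.ofReal_mul (by positivity)]

lemma sqrt_pow_eq_rpow {x : ℝ} (hx : 0 ≤ x) (m : ℕ) :
    Real.sqrt x ^ m = x ^ ((m:ℝ)/2) := by
  rw [Real.sqrt_eq_rpow, ← Real.rpow_natCast (x ^ ((1:ℝ)/2)) m, ← Real.rpow_mul hx]
  congr 1; ring

lemma aux_volA (m : ℕ) (hm : 1 ≤ m) (r : EuclideanSpace ℝ (Fin (m+1))) (hr : ‖r‖ = 1)
    (γ : ℝ) (hγ0 : 0 < γ) (hγ1 : γ < 1) :
    volume {x : EuclideanSpace ℝ (Fin (m+1)) | ⟪r,x⟫ ∈ Icc 0 γ ∧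
        ‖x‖^2 - ⟪r,x⟫^2 ≤ (Real.sqrt (1-γ^2)/γ * ⟪r,x⟫)^2}
      ≤ ENNReal.ofReal ((Real.sqrt π ^ m / Real.Gamma (m/2+1)) *
          (Real.sqrt (1-γ^2)^m * γ / (m+1))) := by
  set σ : ℝ := Real.sqrt (1-γ^2)/γ with hσdef
  have hσ0 : 0 ≤ σ := by positivity
  set K : ℝ := Real.sqrt π ^ m / Real.Gamma (m/2+1) with hKdef
  have hK0 : 0 ≤ K := by
    have := Real.Gamma_pos_of_pos (show (0:ℝ) < m/2+1 by positivity)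
    positivity
  rw [aux_slice m r hr (Icc 0 γ) measurableSet_Icc (fun t => (σ * t)^2) (by fun_prop)
    (fun t ht => sq_nonneg _)]
  have hpt : ∀ t ∈ Icc (0:ℝ) γ,
      volume (Metric.closedBall (0 : EuclideanSpace ℝ (Fin m)) (Real.sqrt ((σ*t)^2)))
        = ENNReal.ofReal (σ^m * t^m * K) := by
    intro t ht
    have ht0 : 0 ≤ t := ht.1
    rw [Real.sqrt_sq (mul_nonneg hσ0 ht0), aux_ball_vol m hm _ (mul_nonneg hσ0 ht0)]
    congr 1; ring
  rw [setLIntegral_congr_fun measurableSet_Icc hpt]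
  have hint : IntegrableOn (fun t => σ^m * t^m * K) (Icc 0 γ) volume :=
    (Continuous.integrableOn_Icc (by fun_prop))
  rw [← ofReal_integral_eq_lintegral_ofReal hint]
  · apply ENNReal.ofReal_le_ofReal
    rw [MeasureTheory.integral_Icc_eq_integral_Ioc, ← intervalIntegral.integral_of_le hγ0.le]
    rw [intervalIntegral.integral_mul_const, intervalIntegral.integral_const_mul,
      integral_pow]
    have hσγ : σ^m * γ^(m+1) = Real.sqrt (1-γ^2)^m * γ := by
      rw [hσdef, div_pow, pow_succ]
      field_simp
      ring
    push_cast
    rw [zero_pow (by omega), sub_zero]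
    refine le_of_eq ?_
    calc σ ^ m * (γ ^ (m + 1) / ((m:ℝ) + 1)) * K = K * ((σ^m * γ^(m+1)) / ((m:ℝ)+1)) := by ring
      _ = K * (Real.sqrt (1-γ^2)^m * γ / ((m:ℝ)+1)) := by rw [hσγ]
  · filter_upwards [ae_restrict_mem measurableSet_Icc] with t ht
    have : 0 ≤ t := ht.1
    positivity

-- the FTC integral
lemma aux_intB (m : ℕ) (γ : ℝ) (hγ0 : 0 < γ) (hγ1 : γ < 1) :
    ∫ t in γ..1, t/γ * Real.sqrt (1-t^2) ^ m
      = Real.sqrt (1-γ^2)^(m+2) / (γ*(m+2)) := by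
  have h2 : ∀ t ∈ Set.uIcc γ 1, t/γ * Real.sqrt (1-t^2) ^ m
      = t/γ * (1-t^2) ^ ((m:ℝ)/2) := by
    intro t ht
    rw [Set.uIcc_of_le hγ1.le] at ht
    have h1t : 1 - t^2 ≥ 0 := by nlinarith [ht.1, ht.2, hγ0]
    rw [sqrt_pow_eq_rpow h1t]
  rw [intervalIntegral.integral_congr h2]
  have hF : ∀ t ∈ Set.uIcc γ 1, HasDerivAt (fun t : ℝ => -(1-t^2) ^ (((m:ℝ)+2)/2) / (γ*(m+2)))
      (t/γ * (1-t^2) ^ ((m:ℝ)/2)) t := by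
    intro t ht
    have hin : HasDerivAt (fun t : ℝ => 1 - t^2) (-(2*t)) t := by
      simpa using ((hasDerivAt_pow 2 t).const_sub 1)
    have hp : (1:ℝ) ≤ ((m:ℝ)+2)/2 := by
      have : (0:ℝ) ≤ m := Nat.cast_nonneg m
      linarith
    have hrpow := (hin.rpow_const (Or.inr hp))
    have := (hrpow.neg).div_const (γ*(m+2))
    refine this.congr_deriv ?_
    have hexp : ((m:ℝ)+2)/2 - 1 = (m:ℝ)/2 := by ring
    rw [hexp]
    have hγm : γ*((m:ℝ)+2) ≠ 0 := by positivity
    field_simp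
  have hcont : IntervalIntegrable (fun t : ℝ => t/γ * (1-t^2) ^ ((m:ℝ)/2)) volume γ 1 := by
    apply ContinuousOn.intervalIntegrable
    apply ContinuousOn.mul (by fun_prop)
    apply ContinuousOn.rpow_const (by fun_prop)
    intro t ht
    right; positivity
  rw [intervalIntegral.integral_eq_sub_of_hasDerivAt hF hcont]
  have h10 : (1:ℝ) - 1^2 = 0 := by norm_num
  rw [h10, Real.zero_rpow (by positivity)]
  rw [sqrt_pow_eq_rpow (by nlinarith : (0:ℝ) ≤ 1 - γ^2) (m+2)]
  push_cast
  ring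

lemma aux_volB (m : ℕ) (hm : 1 ≤ m) (r : EuclideanSpace ℝ (Fin (m+1))) (hr : ‖r‖ = 1)
    (γ : ℝ) (hγ0 : 0 < γ) (hγ1 : γ < 1) :
    volume {x : EuclideanSpace ℝ (Fin (m+1)) | ⟪r,x⟫ ∈ Icc γ 1 ∧
        ‖x‖^2 - ⟪r,x⟫^2 ≤ 1 - ⟪r,x⟫^2}
      ≤ ENNReal.ofReal ((Real.sqrt π ^ m / Real.Gamma (m/2+1)) *
          (Real.sqrt (1-γ^2)^(m+2) / (γ*(m+2)))) := by
  set K : ℝ := Real.sqrt π ^ m / Real.Gamma (m/2+1) with hKdef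
  have hK0 : 0 ≤ K := by
    have := Real.Gamma_pos_of_pos (show (0:ℝ) < m/2+1 by positivity)
    positivity
  rw [aux_slice m r hr (Icc γ 1) measurableSet_Icc (fun t => 1 - t^2) (by fun_prop)
    (fun t ht => by show (0:ℝ) ≤ 1 - t^2; nlinarith [ht.1, ht.2, hγ0])]
  have hpt : ∀ t ∈ Icc γ (1:ℝ),
      volume (Metric.closedBall (0 : EuclideanSpace ℝ (Fin m)) (Real.sqrt (1-t^2)))
        ≤ ENNReal.ofReal (t/γ * Real.sqrt (1-t^2)^m * K) := by
    intro t ht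
    rw [aux_ball_vol m hm _ (Real.sqrt_nonneg _)]
    apply ENNReal.ofReal_le_ofReal
    have h1 : 1 ≤ t/γ := (one_le_div hγ0).mpr ht.1
    have h2 : 0 ≤ Real.sqrt (1-t^2)^m * K := mul_nonneg (by positivity) hK0
    calc Real.sqrt (1-t^2)^m * K = 1 * (Real.sqrt (1-t^2)^m * K) := by ring
      _ ≤ t/γ * (Real.sqrt (1-t^2)^m * K) := by gcongr
      _ = t/γ * Real.sqrt (1-t^2)^m * K := by ring
  calc ∫⁻ t in Icc γ 1, volume (Metric.closedBall (0 : EuclideanSpace ℝ (Fin m)) (Real.sqrt (1-t^2)))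
      ≤ ∫⁻ t in Icc γ 1, ENNReal.ofReal (t/γ * Real.sqrt (1-t^2)^m * K) :=
        setLIntegral_mono (by fun_prop) hpt
    _ = ENNReal.ofReal (∫ t in Icc γ 1, t/γ * Real.sqrt (1-t^2)^m * K) := by
        rw [← ofReal_integral_eq_lintegral_ofReal]
        · exact Continuous.integrableOn_Icc (by fun_prop)
        · filter_upwards [ae_restrict_mem measurableSet_Icc] with t ht
          have h1 : 0 ≤ t/γ := div_nonneg (le_trans hγ0.le ht.1) hγ0.le
          positivity
    _ ≤ ENNReal.ofReal (K * (Real.sqrt (1-γ^2)^(m+2) / (γ*(m+2)))) := by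
        apply ENNReal.ofReal_le_ofReal
        rw [MeasureTheory.integral_Icc_eq_integral_Ioc, ← intervalIntegral.integral_of_le hγ1.le,
          intervalIntegral.integral_mul_const, aux_intB m γ hγ0 hγ1]
        exact le_of_eq (by ring)

lemma gamma_lower (x : ℝ) (hx : 0 < x) :
    Real.sqrt (π / (x + 1/2)) ≤ Real.sqrt π * Real.Gamma (x + 1/2) / Real.Gamma (x + 1) := by
  have hG1 : 0 < Real.Gamma (x + 1/2) := Real.Gamma_pos_of_pos (by linarith)
  have hG2 : 0 < Real.Gamma (x + 1) := Real.Gamma_pos_of_pos (by linarith)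
  have hG3 : 0 < Real.Gamma (x + 3/2) := Real.Gamma_pos_of_pos (by linarith)
  have hrec : Real.Gamma (x + 3/2) = (x + 1/2) * Real.Gamma (x + 1/2) := by
    rw [show x + 3/2 = (x + 1/2) + 1 by ring, Real.Gamma_add_one (by positivity)]
  have hlc : Real.Gamma (x+1)^2 ≤ Real.Gamma (x+1/2) * Real.Gamma (x+3/2) := by
    have h := Real.convexOn_log_Gamma.2 (show x + 1/2 ∈ Ioi (0:ℝ) by simp; linarith)
      (show x + 3/2 ∈ Ioi (0:ℝ) by simp; linarith)
      (by norm_num : (0:ℝ) ≤ 1/2) (by norm_num : (0:ℝ) ≤ 1/2) (by norm_num)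
    have hmid : (1/2 : ℝ) • (x + 1/2) + (1/2 : ℝ) • (x + 3/2) = x + 1 := by
      simp [smul_eq_mul]; ring
    rw [hmid] at h
    simp only [Function.comp_apply, smul_eq_mul] at h
    have h3 : Real.log (Real.Gamma (x+1)^2) ≤
        Real.log (Real.Gamma (x+1/2) * Real.Gamma (x+3/2)) := by
      rw [Real.log_pow, Real.log_mul hG1.ne' hG3.ne']
      push_cast; linarith
    exact (Real.log_le_log_iff (by positivity) (by positivity)).mp h3
  set D : ℝ := Real.sqrt π * Real.Gamma (x+1/2) / Real.Gamma (x+1) with hD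
  set D' : ℝ := Real.sqrt π * Real.Gamma (x+1) / Real.Gamma (x+3/2) with hD'
  have hπ : Real.sqrt π * Real.sqrt π = π := Real.mul_self_sqrt Real.pi_pos.le
  have hDD' : D * D' = π / (x + 1/2) := by
    rw [hD, hD', hrec]
    have hne : Real.Gamma (x+1/2) ≠ 0 := hG1.ne'
    have hne2 : Real.Gamma (x+1) ≠ 0 := hG2.ne'
    have hne3 : x + 1/2 ≠ 0 := by positivity
    field_simp
    linear_combination hπ
  have hD'le : D' ≤ D := by
    rw [hD, hD', div_le_div_iff₀ hG3 hG2]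
    nlinarith [Real.sqrt_nonneg π, hlc]
  have hD0 : 0 ≤ D := by positivity
  have hDsq : π / (x + 1/2) ≤ D^2 := by
    rw [← hDD', sq]
    exact mul_le_mul_of_nonneg_left hD'le hD0
  calc Real.sqrt (π / (x + 1/2)) ≤ Real.sqrt (D^2) := Real.sqrt_le_sqrt hDsq
    _ = D := Real.sqrt_sq hD0

lemma key_ineq (m : ℕ) (γ : ℝ) (hγl : 1 / Real.sqrt (2*π*((m:ℝ)+1)) < γ) (hγu : γ < 1) :
    γ/((m:ℝ)+1) + (1-γ^2)/(γ*((m:ℝ)+2))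
      ≤ Real.sqrt π * Real.Gamma ((m:ℝ)/2 + 1) / Real.Gamma (((m:ℝ)+3)/2) := by
  set nn : ℝ := (m:ℝ) + 1 with hnn
  have hnn1 : 1 ≤ nn := by rw [hnn]; have : (0:ℝ) ≤ m := Nat.cast_nonneg m; linarith
  have hnn0 : 0 < nn := lt_of_lt_of_le one_pos hnn1
  have hπ3 : (3:ℝ) < π := Real.pi_gt_three
  set a : ℝ := Real.sqrt (2*π*nn) with ha
  have ha2 : a^2 = 2*π*nn := Real.sq_sqrt (by positivity)
  have ha0 : 0 < a := Real.sqrt_pos.mpr (by positivity)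
  have ha1 : 1 ≤ a := by
    rw [show (1:ℝ) = Real.sqrt 1 from (Real.sqrt_one).symm, ha]
    exact Real.sqrt_le_sqrt (by nlinarith)
  have hγpos : 0 < γ := lt_trans (by positivity) hγl
  have hγ0le : 1/a ≤ γ := hγl.le
  have hγ0pos : 0 < 1/a := by positivity
  have hident : γ/nn + (1-γ^2)/(γ*(nn+1)) = (γ/nn + 1/γ)/(nn+1) := by
    field_simp
    ring
  rw [show ((m:ℝ)+2) = nn+1 by rw [hnn]; ring, hident]
  have hmono : γ/nn + 1/γ ≤ (1/a)/nn + 1/(1/a) := by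
    rw [div_add_div _ _ hnn0.ne' hγpos.ne', div_add_div _ _ hnn0.ne' hγ0pos.ne',
      div_le_div_iff₀ (by positivity) (by positivity)]
    have h1 : γ * (1/a) ≤ 1 := by
      calc γ * (1/a) ≤ 1 * 1 := by
            apply mul_le_mul hγu.le _ (by positivity) zero_le_one
            rw [div_le_one ha0]; exact ha1
        _ = 1 := by ring
    have hprod : 0 ≤ (γ - 1/a) * (nn - γ * (1/a)) :=
      mul_nonneg (by linarith) (by linarith)
    nlinarith [hγpos, hγ0pos, hnn0]
  have hstep3 : ((1/a)/nn + 1/(1/a))/(nn+1) ≤ Real.sqrt (2*π/(nn+1)) := by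
    rw [one_div_one_div]
    apply (Real.le_sqrt (by positivity) (by positivity)).mpr
    rw [div_pow]
    rw [div_le_div_iff₀ (by positivity) (by positivity)]
    have hXsq : ((1/a)/nn + a)^2 = 1/(a^2*nn^2) + 2/nn + a^2 := by
      field_simp
      ring
    rw [hXsq, ha2]
    have hS : 1/((2*π*nn)*nn^2) + 2/nn ≤ 2*π := by
      have h6 : (6:ℝ) ≤ (2*π*nn)*nn^2 := by
        have h61 : (6:ℝ) ≤ 2*π*nn := by nlinarith
        have h62 : (1:ℝ) ≤ nn^2 := one_le_pow₀ hnn1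
        nlinarith
      have h1 : 1/((2*π*nn)*nn^2) ≤ 1/6 := by
        apply one_div_le_one_div_of_le (by norm_num) h6
      have h2 : 2/nn ≤ 2 := by
        rw [div_le_iff₀ hnn0]; nlinarith
      linarith
    calc (1/((2*π*nn)*nn^2) + 2/nn + 2*π*nn) * (nn+1)
        ≤ (2*π + 2*π*nn)*(nn+1) := by
          apply mul_le_mul_of_nonneg_right (by linarith) (by linarith)
      _ = 2*π*(nn+1)^2 := by ring
  have hstep4 : Real.sqrt (2*π/(nn+1)) ≤
      Real.sqrt π * Real.Gamma ((m:ℝ)/2 + 1) / Real.Gamma (((m:ℝ)+3)/2) := by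
    have hg := gamma_lower (((m:ℝ)+1)/2) (by positivity)
    rw [show ((m:ℝ)+1)/2 + 1/2 = (m:ℝ)/2+1 by ring,
      show ((m:ℝ)+1)/2 + 1 = ((m:ℝ)+3)/2 by ring] at hg
    have harg : 2*π/(nn+1) = π / ((m:ℝ)/2+1) := by
      rw [hnn]
      field_simp
      ring
    rw [harg]
    exact hg
  calc (γ/nn + 1/γ)/(nn+1) ≤ ((1/a)/nn + 1/(1/a))/(nn+1) := by
        gcongr
    _ ≤ _ := le_trans hstep3 hstep4

theorem stmt7 (n : ℕ) (hn : 1 ≤ n)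
    (r : EuclideanSpace ℝ (Fin n)) (hr : ‖r‖ = 1) (γ : ℝ)
    (hγl : 1 / Real.sqrt (2 * Real.pi * n) < γ) (hγu : γ < 1) :
    (((volume : Measure (EuclideanSpace ℝ (Fin n))).toSphere Set.univ)⁻¹ •
        (volume : Measure (EuclideanSpace ℝ (Fin n))).toSphere)
      {z : Metric.sphere (0 : EuclideanSpace ℝ (Fin n)) 1 |
        γ ≤ ⟪r, (z : EuclideanSpace ℝ (Fin n))⟫} ≤
      ENNReal.ofReal ((1 - γ ^ 2) ^ (((n : ℝ) - 1) / 2)) := by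
  have hπ0 : (0:ℝ) < π := Real.pi_pos
  have hγpos : 0 < γ := lt_trans (by positivity) hγl
  set cap : Set (Metric.sphere (0 : EuclideanSpace ℝ (Fin n)) 1) :=
    {z | γ ≤ ⟪r, (z : EuclideanSpace ℝ (Fin n))⟫} with hcapdef
  have hcapmeas : MeasurableSet cap := by
    have hcont : Continuous fun z : Metric.sphere (0 : EuclideanSpace ℝ (Fin n)) 1 =>
        ⟪r, (z : EuclideanSpace ℝ (Fin n))⟫ :=
      Continuous.inner continuous_const continuous_subtype_val
    exact measurableSet_le measurable_const hcont.measurable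
  rw [Measure.smul_apply, smul_eq_mul]
  -- rewrite toSphere applications
  have hdim : Module.finrank ℝ (EuclideanSpace ℝ (Fin n)) = n := finrank_euclideanSpace_fin
  have hcap_eq : (volume : Measure (EuclideanSpace ℝ (Fin n))).toSphere cap
      = n * volume {x : EuclideanSpace ℝ (Fin n) | ‖x‖ ∈ Ioo 0 1 ∧ γ * ‖x‖ ≤ ⟪r, x⟫} := by
    rw [Measure.toSphere_apply' _ hcapmeas, hdim]
    congr 2
    ext x
    constructor
    · rintro ⟨c, hc, y, ⟨z, hz, rfl⟩, rfl⟩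
      have hz1 : ‖(z : EuclideanSpace ℝ (Fin n))‖ = 1 :=
        mem_sphere_zero_iff_norm.mp z.2
      have hc0 : (0:ℝ) < c := hc.1
      constructor
      · rw [norm_smul, hz1, Real.norm_eq_abs, abs_of_pos hc0, mul_one]
        exact hc
      · rw [real_inner_smul_right, norm_smul, hz1, Real.norm_eq_abs, abs_of_pos hc0, mul_one]
        calc γ * c = c * γ := mul_comm _ _
          _ ≤ c * ⟪r, (z : EuclideanSpace ℝ (Fin n))⟫ := by
            apply mul_le_mul_of_nonneg_left hz hc0.le
    · rintro ⟨⟨h0, h1⟩, h2⟩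
      have hx0 : ‖x‖ ≠ 0 := ne_of_gt h0
      have hy : ‖x‖⁻¹ • x ∈ Metric.sphere (0 : EuclideanSpace ℝ (Fin n)) 1 := by
        rw [mem_sphere_zero_iff_norm, norm_smul, norm_inv, norm_norm, inv_mul_cancel₀ hx0]
      refine ⟨‖x‖, ⟨h0, h1⟩, ‖x‖⁻¹ • x, ⟨⟨‖x‖⁻¹ • x, hy⟩, ?_, rfl⟩, ?_⟩
      · show γ ≤ ⟪r, ‖x‖⁻¹ • x⟫
        rw [real_inner_smul_right]
        calc γ = ‖x‖⁻¹ * (γ * ‖x‖) := by field_simp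
          _ ≤ ‖x‖⁻¹ * ⟪r, x⟫ := by
            apply mul_le_mul_of_nonneg_left h2 (inv_nonneg.mpr h0.le)
      · exact smul_inv_smul₀ hx0 x
  have huniv_eq : (volume : Measure (EuclideanSpace ℝ (Fin n))).toSphere Set.univ
      = n * volume (Metric.ball (0 : EuclideanSpace ℝ (Fin n)) 1) := by
    rw [Measure.toSphere_apply_univ, hdim]
  set B1 := volume (Metric.ball (0 : EuclideanSpace ℝ (Fin n)) 1) with hB1
  have hB1pos : B1 ≠ 0 := (Metric.measure_ball_pos volume 0 one_pos).ne'
  have hB1top : B1 ≠ ⊤ := measure_ball_lt_top.ne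
  rcases eq_or_lt_of_le hn with h1 | hm2
  · -- n = 1
    obtain rfl : n = 1 := h1.symm
    have hexp : (((1:ℕ) : ℝ) - 1)/2 = 0 := by norm_num
    rw [hexp, Real.rpow_zero, ENNReal.ofReal_one]
    calc ((volume : Measure (EuclideanSpace ℝ (Fin 1))).toSphere Set.univ)⁻¹ *
          (volume : Measure (EuclideanSpace ℝ (Fin 1))).toSphere cap
        ≤ ((volume : Measure (EuclideanSpace ℝ (Fin 1))).toSphere Set.univ)⁻¹ *
          (volume : Measure (EuclideanSpace ℝ (Fin 1))).toSphere Set.univ :=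
          mul_le_mul_right (measure_mono (subset_univ _)) _
      _ ≤ 1 := ENNReal.inv_mul_le_one _
  · -- n ≥ 2
    obtain ⟨m, rfl⟩ : ∃ m, n = m + 1 := ⟨n - 1, by omega⟩
    have hm : 1 ≤ m := by omega
    have h1γ2 : (0:ℝ) < 1 - γ^2 := by nlinarith
    set s : ℝ := Real.sqrt (1 - γ^2) with hs
    have hs0 : 0 < s := Real.sqrt_pos.mpr h1γ2
    have hs2 : s^2 = 1 - γ^2 := Real.sq_sqrt h1γ2.le
    set K : ℝ := Real.sqrt π ^ m / Real.Gamma (m/2+1) with hK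
    have hΓm : 0 < Real.Gamma ((m:ℝ)/2+1) := Real.Gamma_pos_of_pos (by positivity)
    have hΓm3 : 0 < Real.Gamma (((m:ℝ)+3)/2) := Real.Gamma_pos_of_pos (by positivity)
    have hK0 : 0 < K := by rw [hK]; positivity
    -- subset of A ∪ B
    have hsub : {x : EuclideanSpace ℝ (Fin (m+1)) | ‖x‖ ∈ Ioo 0 1 ∧ γ * ‖x‖ ≤ ⟪r, x⟫}
        ⊆ {x : EuclideanSpace ℝ (Fin (m+1)) | ⟪r,x⟫ ∈ Icc 0 γ ∧
            ‖x‖^2 - ⟪r,x⟫^2 ≤ (s/γ * ⟪r,x⟫)^2}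
          ∪ {x : EuclideanSpace ℝ (Fin (m+1)) | ⟪r,x⟫ ∈ Icc γ 1 ∧
            ‖x‖^2 - ⟪r,x⟫^2 ≤ 1 - ⟪r,x⟫^2} := by
      rintro x ⟨⟨h0, h1⟩, h2⟩
      have ht0 : 0 < ⟪r, x⟫ := lt_of_lt_of_le (by positivity) h2
      have htle : ⟪r, x⟫ ≤ ‖x‖ := by
        calc ⟪r, x⟫ ≤ ‖r‖ * ‖x‖ := real_inner_le_norm r x
          _ = ‖x‖ := by rw [hr, one_mul]
      by_cases hc : ⟪r, x⟫ ≤ γ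
      · left
        refine ⟨⟨ht0.le, hc⟩, ?_⟩
        have key : γ^2 * ‖x‖^2 ≤ ⟪r, x⟫^2 := by
          have hmm := mul_le_mul h2 h2 (by positivity) ht0.le
          nlinarith [hmm]
        rw [div_mul_eq_mul_div, div_pow, mul_pow, hs2, le_div_iff₀ (by positivity : (0:ℝ) < γ^2)]
        nlinarith
      · right
        refine ⟨⟨le_of_not_ge hc, le_trans htle h1.le⟩, by nlinarith⟩
    -- volume bound for the cone
    have hconebound : volume {x : EuclideanSpace ℝ (Fin (m+1)) | ‖x‖ ∈ Ioo 0 1 ∧ γ * ‖x‖ ≤ ⟪r, x⟫}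
        ≤ ENNReal.ofReal (K * (s^m * γ / (m+1)) + K * (s^(m+2) / (γ*(m+2)))) := by
      calc volume {x : EuclideanSpace ℝ (Fin (m+1)) | ‖x‖ ∈ Ioo 0 1 ∧ γ * ‖x‖ ≤ ⟪r, x⟫}
          ≤ volume ({x : EuclideanSpace ℝ (Fin (m+1)) | ⟪r,x⟫ ∈ Icc 0 γ ∧
              ‖x‖^2 - ⟪r,x⟫^2 ≤ (s/γ * ⟪r,x⟫)^2}
            ∪ {x : EuclideanSpace ℝ (Fin (m+1)) | ⟪r,x⟫ ∈ Icc γ 1 ∧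
              ‖x‖^2 - ⟪r,x⟫^2 ≤ 1 - ⟪r,x⟫^2}) := measure_mono hsub
        _ ≤ volume {x : EuclideanSpace ℝ (Fin (m+1)) | ⟪r,x⟫ ∈ Icc 0 γ ∧
              ‖x‖^2 - ⟪r,x⟫^2 ≤ (s/γ * ⟪r,x⟫)^2}
            + volume {x : EuclideanSpace ℝ (Fin (m+1)) | ⟪r,x⟫ ∈ Icc γ 1 ∧
              ‖x‖^2 - ⟪r,x⟫^2 ≤ 1 - ⟪r,x⟫^2} := measure_union_le _ _
        _ ≤ ENNReal.ofReal (K * (s^m * γ / (m+1))) + ENNReal.ofReal (K * (s^(m+2) / (γ*(m+2)))) := by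
            apply add_le_add
            · exact aux_volA m hm r hr γ hγpos hγu
            · exact aux_volB m hm r hr γ hγpos hγu
        _ = ENNReal.ofReal (K * (s^m * γ / (m+1)) + K * (s^(m+2) / (γ*(m+2)))) := by
            rw [← ENNReal.ofReal_add (by positivity) (by positivity)]
    -- real inequality
    have hreal : K * (s^m * γ / (m+1)) + K * (s^(m+2) / (γ*(m+2)))
        ≤ s^m * (Real.sqrt π ^ (m+1) / Real.Gamma (((m+1):ℕ)/2+1)) := by
      have hki := key_ineq m γ (by push_cast at hγl; exact hγl) hγu
      have hcast : (((m+1):ℕ):ℝ)/2+1 = ((m:ℝ)+3)/2 := by push_cast; ring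
      rw [hcast]
      have hs12 : s^(m+2) = s^m * (1-γ^2) := by rw [pow_add, hs2]
      have hKs : 0 ≤ K * s^m := by positivity
      calc K * (s^m * γ / (m+1)) + K * (s^(m+2) / (γ*(m+2)))
          = (K * s^m) * (γ/((m:ℝ)+1) + (1-γ^2)/(γ*((m:ℝ)+2))) := by
            rw [hs12]; push_cast; ring
        _ ≤ (K * s^m) * (Real.sqrt π * Real.Gamma ((m:ℝ)/2 + 1) / Real.Gamma (((m:ℝ)+3)/2)) :=
            mul_le_mul_of_nonneg_left hki hKs
        _ = s^m * (Real.sqrt π ^ (m+1) / Real.Gamma (((m:ℝ)+3)/2)) := by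
            rw [hK]
            field_simp
            ring
    -- ball volume
    have hBall : B1 = ENNReal.ofReal (Real.sqrt π ^ (m+1) / Real.Gamma (((m+1):ℕ)/2+1)) := by
      rw [hB1, EuclideanSpace.volume_ball, Fintype.card_fin]
      simp
    have hkey : volume {x : EuclideanSpace ℝ (Fin (m+1)) | ‖x‖ ∈ Ioo 0 1 ∧ γ * ‖x‖ ≤ ⟪r, x⟫}
        ≤ ENNReal.ofReal (s^m) * B1 := by
      calc volume {x : EuclideanSpace ℝ (Fin (m+1)) | ‖x‖ ∈ Ioo 0 1 ∧ γ * ‖x‖ ≤ ⟪r, x⟫}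
          ≤ ENNReal.ofReal (K * (s^m * γ / (m+1)) + K * (s^(m+2) / (γ*(m+2)))) := hconebound
        _ ≤ ENNReal.ofReal (s^m * (Real.sqrt π ^ (m+1) / Real.Gamma (((m+1):ℕ)/2+1))) :=
            ENNReal.ofReal_le_ofReal hreal
        _ = ENNReal.ofReal (s^m) * B1 := by
            rw [hBall, ← ENNReal.ofReal_mul (by positivity)]
    -- final ENNReal computation
    have htURW : (volume : Measure (EuclideanSpace ℝ (Fin (m+1)))).toSphere Set.univ
        = (m+1 : ℕ) * B1 := huniv_eq
    have htU0 : ((m+1 : ℕ) : ℝ≥0∞) * B1 ≠ 0 :=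
      mul_ne_zero (by exact_mod_cast Nat.succ_ne_zero m) hB1pos
    have htUtop : ((m+1 : ℕ) : ℝ≥0∞) * B1 ≠ ⊤ :=
      ENNReal.mul_ne_top (ENNReal.natCast_ne_top _) hB1top
    have hfin : ENNReal.ofReal (s^m)
        = ENNReal.ofReal ((1 - γ^2) ^ ((((m+1:ℕ):ℝ) - 1)/2)) := by
      congr 1
      rw [show ((((m+1:ℕ)):ℝ) - 1)/2 = (m:ℝ)/2 by push_cast; ring]
      exact sqrt_pow_eq_rpow h1γ2.le m
    calc ((volume : Measure (EuclideanSpace ℝ (Fin (m+1)))).toSphere Set.univ)⁻¹ *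
          (volume : Measure (EuclideanSpace ℝ (Fin (m+1)))).toSphere cap
        = ((volume : Measure (EuclideanSpace ℝ (Fin (m+1)))).toSphere Set.univ)⁻¹ *
          ((m+1 : ℕ) * volume {x : EuclideanSpace ℝ (Fin (m+1)) | ‖x‖ ∈ Ioo 0 1 ∧
            γ * ‖x‖ ≤ ⟪r, x⟫}) := by rw [hcap_eq]
      _ ≤ ((volume : Measure (EuclideanSpace ℝ (Fin (m+1)))).toSphere Set.univ)⁻¹ *
          ((m+1 : ℕ) * (ENNReal.ofReal (s^m) * B1)) :=
          mul_le_mul_right (mul_le_mul_right hkey _) _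
      _ = ENNReal.ofReal (s^m) * ((((m+1 : ℕ) : ℝ≥0∞) * B1)⁻¹ * (((m+1 : ℕ) : ℝ≥0∞) * B1)) := by
          rw [htURW]; ring
      _ = ENNReal.ofReal (s^m) := by
          rw [ENNReal.inv_mul_cancel htU0 htUtop, mul_one]
      _ = ENNReal.ofReal ((1 - γ^2) ^ ((((m+1:ℕ):ℝ) - 1)/2)) := hfin
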